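/- Associativity of the white multiplication: the two open games (X,1)⊗(X,1)⊗(X,1) → (X,1) obtained by composing ∇⁺_X with (∇⁺_X ⊗ id) and with (id ⊗ ∇⁺_X) are isomorphic. Concretely, the game with Σ = X × X, play ((a,b),(x₁,x₂,x₃)) ↦ b, and equilibria E((x₁,x₂,x₃),*) = {(a,b) | x₁ = x₂, a = x₁, a = x₃, b = a} is isomorphic to the one with equilibria {(a,b) | x₂ = x₃, a = x₂, x₁ = a, b = a}; both equal {(x₁,x₁)} when x₁ = x₂ = x₃ and ∅ otherwise. -/

import Mathlib

/-- An open game `(X,S) → (Y,R)`: a set of strategy profiles together with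
play, coplay and equilibrium functions. -/
structure OpenGame (X S Y R : Type) where
  Strat : Type
  play : Strat → X → Y
  coplay : Strat → X → R → S
  equil : X → (Y → R) → Set Strat

namespace OpenGame

/-- Sequential composition: `comp G H` is `H ∘ G` (first `G`, then `H`). -/
def comp {X S Y R Z Q : Type} (G : OpenGame X S Y R) (H : OpenGame Y R Z Q) :
    OpenGame X S Z Q where
  Strat := G.Strat × H.Strat
  play := fun p x => H.play p.2 (G.play p.1 x)
  coplay := fun p x q => G.coplay p.1 x (H.coplay p.2 (G.play p.1 x) q)
  equil := fun x k =>
    {p | p.1 ∈ G.equil x (fun y => H.coplay p.2 y (k (H.play p.2 y))) ∧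
         p.2 ∈ H.equil (G.play p.1 x) k}

/-- Monoidal product of open games. -/
def tensor {X S Y R X' S' Y' R' : Type}
    (G : OpenGame X S Y R) (H : OpenGame X' S' Y' R') :
    OpenGame (X × X') (S × S') (Y × Y') (R × R') where
  Strat := G.Strat × H.Strat
  play := fun p x => (G.play p.1 x.1, H.play p.2 x.2)
  coplay := fun p x r => (G.coplay p.1 x.1 r.1, H.coplay p.2 x.2 r.2)
  equil := fun x k =>
    {p | p.1 ∈ G.equil x.1 (fun y => (k (y, H.play p.2 x.2)).1) ∧
         p.2 ∈ H.equil x.2 (fun y' => (k (G.play p.1 x.1, y')).2)}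

/-- A (globular) morphism of open games: a map of strategy profiles preserving
play, coplay, and mapping equilibria to equilibria. -/
def IsMorphism {X S Y R : Type} (G H : OpenGame X S Y R) (α : G.Strat → H.Strat) : Prop :=
  (∀ σ x, G.play σ x = H.play (α σ) x) ∧
  (∀ σ x r, G.coplay σ x r = H.coplay (α σ) x r) ∧
  (∀ σ x k, σ ∈ G.equil x k → α σ ∈ H.equil x k)

/-- Isomorphism of open games: a bijection of strategy profiles preserving play,
coplay, and equilibria in both directions. -/
def Isomorphic {X S Y R : Type} (G H : OpenGame X S Y R) : Prop :=
  ∃ e : G.Strat ≃ H.Strat,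
    (∀ σ x, G.play σ x = H.play (e σ) x) ∧
    (∀ σ x r, G.coplay σ x r = H.coplay (e σ) x r) ∧
    (∀ σ x k, σ ∈ G.equil x k ↔ e σ ∈ H.equil x k)

/-- The identity open game on `(X,S)`. -/
def idOG (X S : Type) : OpenGame X S X S where
  Strat := Unit
  play := fun _ x => x
  coplay := fun _ _ s => s
  equil := fun _ _ => Set.univ

end OpenGame

open OpenGame

/-- `∇⁺_X ∘ (∇⁺_X ⊗ id) : (X,1)⊗(X,1)⊗(X,1) → (X,1)`. -/
def nablaL (X : Type) : OpenGame (X × X × X) Unit X Unit where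
  Strat := X × X
  play := fun p _ => p.2
  coplay := fun _ _ _ => ()
  equil := fun x _ => {p | x.1 = x.2.1 ∧ p.1 = x.1 ∧ p.1 = x.2.2 ∧ p.2 = p.1}

/-- `∇⁺_X ∘ (id ⊗ ∇⁺_X) : (X,1)⊗(X,1)⊗(X,1) → (X,1)`. -/
def nablaR (X : Type) : OpenGame (X × X × X) Unit X Unit where
  Strat := X × X
  play := fun p _ => p.2
  coplay := fun _ _ _ => ()
  equil := fun x _ => {p | x.2.1 = x.2.2 ∧ p.1 = x.2.1 ∧ x.1 = p.1 ∧ p.2 = p.1}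

/-- associativity of the white multiplication up to isomorphism. -/
theorem nabla_assoc (X : Type) : Isomorphic (nablaL X) (nablaR X) := by
  refine ⟨Equiv.refl _, fun _ _ => rfl, fun _ _ _ => rfl, fun σ x k => ?_⟩
  simp only [nablaL, nablaR, Set.mem_setOf_eq, Equiv.refl_apply]
  change _ ↔ (x.2.1 = x.2.2 ∧ (σ : X × X).1 = x.2.1 ∧ x.1 = (σ : X × X).1 ∧ (σ : X × X).2 = (σ : X × X).1)
  constructor <;> rintro ⟨h1, h2, h3, h4⟩ <;> refine ⟨?_, ?_, ?_, h4⟩ <;> simp_all
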